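/- Let d: ℤ^k → D be a homomorphism to a finitely generated abelian group, let M = ker(d), let I = {1,…,k}, and let J ⊆ I be such that the elements d(e_i) for i ∈ J generate a finite-index subgroup of the subgroup generated by all d(e_i), i ∈ I. Define M_J = (ℤ^J ⊕ ℕ^{I−J}) ∩ M, i.e., the set of m ∈ M with m_i ≥ 0 for all i ∉ J. Then M = M_J + (−M_J), i.e., M_J generates M as a group. -/

import Mathlib

/-- Let `d : ℤ^k → D` be a homomorphism to a finitely generated abelian
group, `M = ker d`, and `J ⊆ {1,…,k}` such that the subgroup generated by the `d(eᵢ)`,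
`i ∈ J`, has finite index in the subgroup generated by all the `d(eᵢ)`.  Let
`M_J = {m ∈ M : mᵢ ≥ 0 for i ∉ J}`.  Then `M = M_J + (-M_J)`: every element of `M` is a
difference of two elements of `M_J`. -/
theorem stmt_14 {k : ℕ} {D : Type*} [AddCommGroup D] [AddGroup.FG D]
    (d : (Fin k → ℤ) →+ D) (J : Set (Fin k))
    (hJ : (AddSubgroup.closure {x : D | ∃ i ∈ J, x = d (Pi.single i 1)}).relIndex
        (AddSubgroup.closure {x : D | ∃ i, x = d (Pi.single i 1)}) ≠ 0) :
    ∀ v : Fin k → ℤ, d v = 0 →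
      ∃ a b : Fin k → ℤ, d a = 0 ∧ d b = 0 ∧
        (∀ i, i ∉ J → 0 ≤ a i) ∧ (∀ i, i ∉ J → 0 ≤ b i) ∧ v = a - b := by
  classical
  set B := AddSubgroup.closure {x : D | ∃ i ∈ J, x = d (Pi.single i 1)} with hB
  set A := AddSubgroup.closure {x : D | ∃ i, x = d (Pi.single i 1)} with hA
  set m := B.relIndex A with hm
  have hmpos : 0 < m := Nat.pos_of_ne_zero hJ
  -- for each i, m • d(e_i) ∈ B
  have key : ∀ i : Fin k, ∃ c : Fin k → ℤ, (∀ j ∉ J, c j = 0) ∧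
      d c = (m : ℤ) • d (Pi.single i 1) := by
    intro i
    have hxA : d (Pi.single i 1) ∈ A := AddSubgroup.subset_closure ⟨i, rfl⟩
    have hmem : m • (⟨d (Pi.single i 1), hxA⟩ : A) ∈ B.addSubgroupOf A :=
      AddSubgroup.nsmul_index_mem (B.addSubgroupOf A) _
    have hmB : (m : ℤ) • d (Pi.single i 1) ∈ B := by
      have := hmem
      rw [AddSubgroup.mem_addSubgroupOf] at this
      simpa [natCast_zsmul] using this
    -- B = image under d of closure of singles with index in J
    have hset : {x : D | ∃ i ∈ J, x = d (Pi.single i 1)}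
        = d '' {v : Fin k → ℤ | ∃ i ∈ J, v = Pi.single i 1} := by
      ext x
      constructor
      · rintro ⟨i, hi, rfl⟩
        exact ⟨Pi.single i 1, ⟨i, hi, rfl⟩, rfl⟩
      · rintro ⟨v, ⟨i, hi, rfl⟩, rfl⟩
        exact ⟨i, hi, rfl⟩
    rw [hB, hset, ← AddMonoidHom.map_closure] at hmB
    obtain ⟨c, hc, hdc⟩ := hmB
    refine ⟨c, ?_, hdc⟩
    -- support of c is in J
    have : c ∈ {v : Fin k → ℤ | ∀ j ∉ J, v j = 0} := by
      refine AddSubgroup.closure_induction ?_ ?_ ?_ ?_ hc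
      · rintro v ⟨i, hi, rfl⟩ j hj
        exact Pi.single_eq_of_ne (fun h => hj (by rw [h]; exact hi)) 1
      · intro j _; rfl
      · intro x y _ _ hx hy j hj; simp [Pi.add_apply, hx j hj, hy j hj]
      · intro x _ hx j hj; simp [Pi.neg_apply, hx j hj]
    exact this
  choose c hc hdc using key
  -- the element g with g j = m for j ∉ J and d g = 0
  set g : Fin k → ℤ :=
    ∑ i : Fin k, if i ∈ J then 0 else ((m : ℤ) • Pi.single i 1 - c i) with hg
  have hdg : d g = 0 := by
    rw [hg, map_sum]
    refine Finset.sum_eq_zero fun i _ => ?_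
    by_cases hi : i ∈ J
    · simp [hi]
    · rw [if_neg hi, map_sub, map_zsmul, hdc i, sub_self]
  have hgval : ∀ j ∉ J, g j = (m : ℤ) := by
    intro j hj
    rw [hg, Finset.sum_apply]
    have key2 : ∀ i : Fin k,
        (if i ∈ J then (0 : Fin k → ℤ) else ((m : ℤ) • Pi.single i 1 - c i)) j
          = if i = j then (m : ℤ) else 0 := by
      intro i
      by_cases hi : i ∈ J
      · rw [if_pos hi, if_neg (fun h : i = j => hj (h ▸ hi))]
        rfl
      · rw [if_neg hi]
        by_cases hij : i = j
        · subst hij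
          simp [hi, Pi.single_eq_same, hc i i hj]
        · rw [if_neg hij]
          simp [Pi.single_eq_of_ne (Ne.symm hij), hc i j hj]
    simp only [key2]
    simp
  intro v hv
  -- choose n large
  set n : ℕ := ∑ i : Fin k, (v i).natAbs with hn
  refine ⟨v + n • g, n • g, ?_, ?_, ?_, ?_, by abel⟩
  · rw [map_add, hv, map_nsmul, hdg, smul_zero, add_zero]
  · rw [map_nsmul, hdg, smul_zero]
  · intro i hi
    have hni : (v i).natAbs ≤ n := Finset.single_le_sum (f := fun i => (v i).natAbs)
      (fun _ _ => Nat.zero_le _) (Finset.mem_univ i)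
    have h1 : -(v i) ≤ (n : ℤ) := le_trans (neg_le_abs _) (by
      rw [Int.abs_eq_natAbs]; exact_mod_cast hni)
    have h2 : (n : ℤ) ≤ (n : ℤ) * (m : ℤ) := le_mul_of_one_le_right (by positivity)
      (by exact_mod_cast hmpos)
    have heq : (v + n • g) i = v i + (n : ℤ) * (m : ℤ) := by
      rw [Pi.add_apply, Pi.smul_apply, hgval i hi, nsmul_eq_mul]
    rw [heq]; linarith
  · intro i hi
    have heq : (n • g) i = (n : ℤ) * (m : ℤ) := by
      rw [Pi.smul_apply, hgval i hi, nsmul_eq_mul]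
    rw [heq]; positivity
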